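/- If r is even, then for any two sequences s, t ∈ Σⁿ with edit(s,t) ≤ 2r, there exists a sequence v ∈ Σⁿ with edit(s,v) ≤ r and edit(t,v) ≤ r. -/

import Mathlib

/-- Cost structure for edit distance (formerly `Levenshtein.Cost` in Mathlib). -/
structure Levenshtein.Cost (α β δ : Type*) where
  delete : α → δ
  insert : β → δ
  substitute : α → β → δ

/-- Unit costs (formerly `Levenshtein.defaultCost` in Mathlib). -/
def Levenshtein.defaultCost {α : Type*} [DecidableEq α] : Levenshtein.Cost α α ℕ where
  delete _ := 1
  insert _ := 1
  substitute a b := if a = b then 0 else 1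

/-- Levenshtein distance (formerly `levenshtein` in Mathlib), by its defining recursion. -/
def levenshtein {α β δ : Type*} [AddZeroClass δ] [Min δ] (C : Levenshtein.Cost α β δ) :
    List α → List β → δ
  | [], [] => 0
  | [], y :: ys => C.insert y + levenshtein C [] ys
  | x :: xs, [] => C.delete x + levenshtein C xs []
  | x :: xs, y :: ys =>
    min (C.delete x + levenshtein C xs (y :: ys))
      (min (C.insert y + levenshtein C (x :: xs) ys) (C.substitute x y + levenshtein C xs ys))
termination_by xs ys => xs.length + ys.length

/-- Edit (Levenshtein) distance between two length-`n` sequences over `α`. -/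
def editDist {α : Type*} [DecidableEq α] {n : ℕ} (s t : Fin n → α) : ℕ :=
  levenshtein Levenshtein.defaultCost (List.ofFn s) (List.ofFn t)

/-- `f` is a `(d₁, d₂)`-sensitive bucketing function. -/
def IsSensitive {α B : Type*} [DecidableEq α] {n : ℕ} (d₁ d₂ : ℕ)
    (f : (Fin n → α) → Set B) : Prop :=
  (∀ s t : Fin n → α, editDist s t ≤ d₁ → (f s ∩ f t).Nonempty) ∧
  (∀ s t : Fin n → α, d₂ ≤ editDist s t → f s ∩ f t = ∅)

section LevLemmas

variable {α β δ : Type*} [AddZeroClass δ] [Min δ] (C : Levenshtein.Cost α β δ)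

@[simp] theorem levenshtein_nil_nil : levenshtein C [] [] = 0 := by
  rw [levenshtein]

@[simp] theorem levenshtein_nil_cons (y : β) (ys : List β) :
    levenshtein C [] (y :: ys) = C.insert y + levenshtein C [] ys := by
  rw [levenshtein]

@[simp] theorem levenshtein_cons_nil (x : α) (xs : List α) :
    levenshtein C (x :: xs) [] = C.delete x + levenshtein C xs [] := by
  rw [levenshtein]

theorem levenshtein_cons_cons (x : α) (xs : List α) (y : β) (ys : List β) :
    levenshtein C (x :: xs) (y :: ys) =
      min (C.delete x + levenshtein C xs (y :: ys))
        (min (C.insert y + levenshtein C (x :: xs) ys)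
          (C.substitute x y + levenshtein C xs ys)) := by
  rw [levenshtein]

end LevLemmas

@[simp] theorem Levenshtein.defaultCost_delete' {α : Type*} [DecidableEq α] (a : α) :
    (Levenshtein.defaultCost : Levenshtein.Cost α α ℕ).delete a = 1 := rfl

@[simp] theorem Levenshtein.defaultCost_insert' {α : Type*} [DecidableEq α] (a : α) :
    (Levenshtein.defaultCost : Levenshtein.Cost α α ℕ).insert a = 1 := rfl

@[simp] theorem Levenshtein.defaultCost_substitute' {α : Type*} [DecidableEq α] (a b : α) :
    (Levenshtein.defaultCost : Levenshtein.Cost α α ℕ).substitute a b = if a = b then 0 else 1 := rfl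

section Helpers

set_option linter.unusedSectionVars false

open Levenshtein (defaultCost)

variable {α : Type*} [DecidableEq α]

private def lev (s t : List α) : ℕ := levenshtein defaultCost s t

private lemma lev_le_del (a : α) (s t : List α) : lev (a::s) t ≤ 1 + lev s t := by
  cases t with
  | nil => simp [lev]
  | cons b t =>
    simp only [lev, levenshtein_cons_cons]
    exact (min_le_left _ _).trans (by simp)

private lemma lev_le_ins (s : List α) (b : α) (t : List α) : lev s (b::t) ≤ 1 + lev s t := by
  cases s with
  | nil => simp [lev]
  | cons a s =>
    simp only [lev, levenshtein_cons_cons]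
    exact ((min_le_right _ _).trans (min_le_left _ _)).trans (by simp)

private lemma lev_le_sub (a : α) (s : List α) (b : α) (t : List α) :
    lev (a::s) (b::t) ≤ 1 + lev s t := by
  simp only [lev, levenshtein_cons_cons]
  refine (min_le_right _ _).trans ((min_le_right _ _).trans ?_)
  simp [Levenshtein.defaultCost]
  split <;> omega

private lemma lev_le_mtch (a : α) (s t : List α) : lev (a::s) (a::t) ≤ lev s t := by
  simp only [lev, levenshtein_cons_cons]
  refine (min_le_right _ _).trans ((min_le_right _ _).trans ?_)
  simp [Levenshtein.defaultCost]

/-- An alignment column. -/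
private inductive Col (α : Type*) where
  | mtch (a : α)
  | subst (a b : α)
  | del (a : α)
  | ins (b : α)

namespace Col

private def lft : List (Col α) → List α
  | [] => []
  | mtch a :: L => a :: lft L
  | subst a _ :: L => a :: lft L
  | del a :: L => a :: lft L
  | ins _ :: L => lft L

private def rgt : List (Col α) → List α
  | [] => []
  | mtch a :: L => a :: rgt L
  | subst _ b :: L => b :: rgt L
  | del _ :: L => rgt L
  | ins b :: L => b :: rgt L

private def cst : List (Col α) → ℕ
  | [] => 0
  | mtch _ :: L => cst L
  | _ :: L => 1 + cst L

private def nS : List (Col α) → ℕ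
  | [] => 0
  | subst _ _ :: L => 1 + nS L
  | _ :: L => nS L

private def nD : List (Col α) → ℕ
  | [] => 0
  | del _ :: L => 1 + nD L
  | _ :: L => nD L

private def nI : List (Col α) → ℕ
  | [] => 0
  | ins _ :: L => 1 + nI L
  | _ :: L => nI L

private def nM : List (Col α) → ℕ
  | [] => 0
  | mtch _ :: L => 1 + nM L
  | _ :: L => nM L

private lemma stats (L : List (Col α)) :
    (lft L).length = nM L + nS L + nD L ∧ (rgt L).length = nM L + nS L + nI L ∧
      cst L = nS L + nD L + nI L := by
  induction L with
  | nil => simp [lft, rgt, cst, nS, nD, nI, nM]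
  | cons c L ih =>
    cases c <;> simp only [lft, rgt, cst, nS, nD, nI, nM, List.length_cons] <;> omega

private lemma lev_le (L : List (Col α)) : lev (lft L) (rgt L) ≤ cst L := by
  induction L with
  | nil => simp [lft, rgt, cst, lev]
  | cons c L ih =>
    cases c with
    | mtch a =>
      have := lev_le_mtch a (lft L) (rgt L)
      simp only [lft, rgt, cst]; omega
    | subst a b =>
      have := lev_le_sub a (lft L) b (rgt L)
      simp only [lft, rgt, cst]; omega
    | del a =>
      have := lev_le_del a (lft L) (rgt L)
      simp only [lft, rgt, cst]; omega
    | ins b =>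
      have := lev_le_ins (lft L) b (rgt L)
      simp only [lft, rgt, cst]; omega

private lemma exists_cols (s t : List α) :
    ∃ L : List (Col α), lft L = s ∧ rgt L = t ∧ cst L ≤ lev s t := by
  induction s generalizing t with
  | nil =>
    induction t with
    | nil => exact ⟨[], by simp [lft, rgt, cst, lev]⟩
    | cons b t iht =>
      obtain ⟨L, h1, h2, h3⟩ := iht
      refine ⟨ins b :: L, by simp [lft, h1], by simp [rgt, h2], ?_⟩
      simp only [cst]; simp [lev] at h3 ⊢; omega
  | cons a s ihs =>
    induction t with
    | nil =>
      obtain ⟨L, h1, h2, h3⟩ := ihs []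
      refine ⟨del a :: L, by simp [lft, h1], by simp [rgt, h2], ?_⟩
      simp only [cst]; simp [lev] at h3 ⊢; omega
    | cons b t iht =>
      have hmin := (levenshtein_cons_cons (C := defaultCost) a s b t)
      rcases le_or_gt (1 + lev s (b :: t)) (lev (a :: s) (b :: t)) with hd | hd
      · obtain ⟨L, h1, h2, h3⟩ := ihs (b :: t)
        exact ⟨del a :: L, by simp [lft, rgt, cst, h1, h2]; omega⟩
      · rcases le_or_gt (1 + lev (a :: s) t) (lev (a :: s) (b :: t)) with hi | hi
        · obtain ⟨L, h1, h2, h3⟩ := iht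
          exact ⟨ins b :: L, by simp [lft, rgt, cst, h1, h2]; omega⟩
        · -- substitution/match branch must attain the min
          have hsub : (if a = b then 0 else 1) + lev s t ≤ lev (a :: s) (b :: t) := by
            have : lev (a :: s) (b :: t) =
                min (1 + lev s (b :: t)) (min (1 + lev (a :: s) t)
                  ((if a = b then 0 else 1) + lev s t)) := hmin
            omega
          obtain ⟨L, h1, h2, h3⟩ := ihs t
          by_cases hab : a = b
          · subst hab
            exact ⟨mtch a :: L, by simp [lft, rgt, cst, h1, h2]; simp at hsub; omega⟩
          · exact ⟨subst a b :: L, by simp [lft, rgt, cst, h1, h2]; simp [hab] at hsub; omega⟩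

end Col

namespace Col

/-- Build the two alignments (s→v, t→v) given budgets: charge the first `q1`
substitutions to the s-side, keep the first `kd` deleted chars and first `ki`
inserted chars in `v`. -/
private def mid : ℕ → ℕ → ℕ → List (Col α) → List (Col α) × List (Col α)
  | _, _, _, [] => ([], [])
  | q1, kd, ki, mtch a :: L =>
      let P := mid q1 kd ki L; (mtch a :: P.1, mtch a :: P.2)
  | 0, kd, ki, subst a b :: L =>
      let P := mid 0 kd ki L; (mtch a :: P.1, subst b a :: P.2)
  | q1+1, kd, ki, subst a b :: L =>
      let P := mid q1 kd ki L; (subst a b :: P.1, mtch b :: P.2)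
  | q1, 0, ki, del a :: L =>
      let P := mid q1 0 ki L; (del a :: P.1, P.2)
  | q1, kd+1, ki, del a :: L =>
      let P := mid q1 kd ki L; (mtch a :: P.1, ins a :: P.2)
  | q1, kd, 0, ins b :: L =>
      let P := mid q1 kd 0 L; (P.1, del b :: P.2)
  | q1, kd, ki+1, ins b :: L =>
      let P := mid q1 kd ki L; (ins b :: P.1, mtch b :: P.2)

private lemma mid_spec (L : List (Col α)) : ∀ q1 kd ki, q1 ≤ nS L → kd ≤ nD L → ki ≤ nI L →
    lft (mid q1 kd ki L).1 = lft L ∧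
    lft (mid q1 kd ki L).2 = rgt L ∧
    rgt (mid q1 kd ki L).1 = rgt (mid q1 kd ki L).2 ∧
    cst (mid q1 kd ki L).1 = q1 + ki + (nD L - kd) ∧
    cst (mid q1 kd ki L).2 = (nS L - q1) + kd + (nI L - ki) ∧
    (rgt (mid q1 kd ki L).1).length = nM L + nS L + kd + ki := by
  induction L with
  | nil =>
    intro q1 kd ki h1 h2 h3
    simp [nS, nD, nI, nM] at h1 h2 h3
    subst h1; subst h2; subst h3
    simp [mid, lft, rgt, cst, nS, nD, nI, nM]
  | cons c L ih =>
    intro q1 kd ki h1 h2 h3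
    cases c with
    | mtch a =>
      simp only [nS, nD, nI] at h1 h2 h3
      obtain ⟨e1, e2, e3, e4, e5, e6⟩ := ih q1 kd ki h1 h2 h3
      simp only [mid, lft, rgt, cst, nS, nD, nI, nM, List.length_cons]
      exact ⟨by rw [e1], by rw [e2], by rw [e3], by omega, by omega, by omega⟩
    | subst a b =>
      simp only [nS, nD, nI] at h1 h2 h3
      cases q1 with
      | zero =>
        obtain ⟨e1, e2, e3, e4, e5, e6⟩ := ih 0 kd ki (Nat.zero_le _) h2 h3
        simp only [mid, lft, rgt, cst, nS, nD, nI, nM, List.length_cons]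
        exact ⟨by rw [e1], by rw [e2], by rw [e3], by omega, by omega, by omega⟩
      | succ q1 =>
        obtain ⟨e1, e2, e3, e4, e5, e6⟩ := ih q1 kd ki (by omega) h2 h3
        simp only [mid, lft, rgt, cst, nS, nD, nI, nM, List.length_cons]
        exact ⟨by rw [e1], by rw [e2], by rw [e3], by omega, by omega, by omega⟩
    | del a =>
      simp only [nS, nD, nI] at h1 h2 h3
      cases kd with
      | zero =>
        obtain ⟨e1, e2, e3, e4, e5, e6⟩ := ih q1 0 ki h1 (Nat.zero_le _) h3
        simp only [mid, lft, rgt, cst, nS, nD, nI, nM, List.length_cons]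
        exact ⟨by rw [e1], by rw [e2], by rw [e3], by omega, by omega, by omega⟩
      | succ kd =>
        obtain ⟨e1, e2, e3, e4, e5, e6⟩ := ih q1 kd ki h1 (by omega) h3
        simp only [mid, lft, rgt, cst, nS, nD, nI, nM, List.length_cons]
        exact ⟨by rw [e1], by rw [e2], by rw [e3], by omega, by omega, by omega⟩
    | ins b =>
      simp only [nS, nD, nI] at h1 h2 h3
      cases ki with
      | zero =>
        obtain ⟨e1, e2, e3, e4, e5, e6⟩ := ih q1 kd 0 h1 h2 (Nat.zero_le _)
        simp only [mid, lft, rgt, cst, nS, nD, nI, nM, List.length_cons]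
        exact ⟨by rw [e1], by rw [e2], by rw [e3], by omega, by omega, by omega⟩
      | succ ki =>
        obtain ⟨e1, e2, e3, e4, e5, e6⟩ := ih q1 kd ki h1 h2 (by omega)
        simp only [mid, lft, rgt, cst, nS, nD, nI, nM, List.length_cons]
        exact ⟨by rw [e1], by rw [e2], by rw [e3], by omega, by omega, by omega⟩

end Col

private lemma choice (q p r' : ℕ) (hc : q + 2*p ≤ 2*(r' + r')) :
    ∃ q1 ki, q1 ≤ q ∧ ki ≤ p ∧ q1 + ki + (p - (p - ki)) ≤ r' + r' ∧
      (q - q1) + (p - ki) + (p - ki) ≤ r' + r' := by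
  by_cases h1 : q + 2*p ≤ r' + r'
  · exact ⟨q, p, le_refl _, le_refl _, by omega, by omega⟩
  · by_cases h2 : q + 2*p - (r' + r') ≤ q
    · exact ⟨q + 2*p - (r' + r'), 0, by omega, by omega, by omega, by omega⟩
    · rcases Nat.even_or_odd (q + 2*p - (r' + r') - q) with ⟨k, hk⟩ | ⟨k, hk⟩
      · exact ⟨q, k, by omega, by omega, by omega, by omega⟩
      · exact ⟨q, k, by omega, by omega, by omega, by omega⟩

private lemma list_mid {n : ℕ} (r : ℕ) (hr : Even r) (ls lt : List α)
    (hls : ls.length = n) (hlt : lt.length = n) (h : lev ls lt ≤ 2 * r) :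
    ∃ v : List α, v.length = n ∧ lev ls v ≤ r ∧ lev lt v ≤ r := by
  obtain ⟨r', rfl⟩ := hr
  obtain ⟨L, hL1, hL2, hL3⟩ := Col.exists_cols ls lt
  obtain ⟨hlen1, hlen2, hcst⟩ := Col.stats L
  rw [hL1, hls] at hlen1
  rw [hL2, hlt] at hlen2
  have hDI : Col.nD L = Col.nI L := by omega
  have hc : Col.nS L + 2 * Col.nD L ≤ 2 * (r' + r') := by omega
  obtain ⟨q1, ki, hq1, hki, hA, hB⟩ := choice (Col.nS L) (Col.nD L) r' hc
  obtain ⟨e1, e2, e3, e4, e5, e6⟩ :=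
    Col.mid_spec L q1 (Col.nD L - ki) ki hq1 (Nat.sub_le _ _) (by omega)
  refine ⟨Col.rgt (Col.mid q1 (Col.nD L - ki) ki L).1, by omega, ?_, ?_⟩
  · have := Col.lev_le (Col.mid q1 (Col.nD L - ki) ki L).1
    rw [e1, hL1] at this
    omega
  · have := Col.lev_le (Col.mid q1 (Col.nD L - ki) ki L).2
    rw [e2, hL2, ← e3] at this
    omega

end Helpers

theorem stmt9 {α : Type*} [Fintype α] [DecidableEq α] (hα : 1 < Fintype.card α)
    {n : ℕ} (r : ℕ) (hr : Even r) (s t : Fin n → α) (h : editDist s t ≤ 2 * r) :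
    ∃ v : Fin n → α, editDist s v ≤ r ∧ editDist t v ≤ r := by
  obtain ⟨v, hv, h1, h2⟩ := list_mid r hr (List.ofFn s) (List.ofFn t)
    (List.length_ofFn (f := s)) (List.length_ofFn (f := t)) h
  refine ⟨fun i => v.get (Fin.cast hv.symm i), ?_, ?_⟩ <;>
  · show lev _ (List.ofFn _) ≤ r
    have hw : List.ofFn (fun i : Fin n => v.get (Fin.cast hv.symm i)) = v := by
      apply List.ext_getElem <;> simp [hv]
    rw [hw]
    first | exact h1 | exact h2
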